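/- If (x(t), y(t), z(t)) is a solution of X₁ = (yz X₀₁∘φ, xz X₀₂∘φ, xy X₀₃∘φ) remaining in a fixed open octant, then after the time reparametrization with ds/dt = 2 x(t) y(t) z(t) · sign, the curve φ(x, y, z) solves the system given by X₀; hence orbits of X₁ in each octant are mapped by φ to orbits of X₀ in (−1, ∞)³. -/

import Mathlib

theorem orbits_mapped_by_phi (X01 X02 X03 : ℝ → ℝ → ℝ → ℝ)
    (x y z σ : ℝ → ℝ) (sgn : ℝ) (hsgn : sgn = 1 ∨ sgn = -1)
    (hoct : ∀ t, 0 < sgn * (x t * y t * z t))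
    (hx : ∀ t, HasDerivAt x
      (y t * z t * X01 (x t ^ 2 - 1) (y t ^ 2 - 1) (z t ^ 2 - 1)) t)
    (hy : ∀ t, HasDerivAt y
      (x t * z t * X02 (x t ^ 2 - 1) (y t ^ 2 - 1) (z t ^ 2 - 1)) t)
    (hz : ∀ t, HasDerivAt z
      (x t * y t * X03 (x t ^ 2 - 1) (y t ^ 2 - 1) (z t ^ 2 - 1)) t)
    (hσ : ∀ τ, HasDerivAt σ
      (1 / (2 * sgn * (x (σ τ) * y (σ τ) * z (σ τ)))) τ) :
    ∀ τ, HasDerivAt (fun u => x (σ u) ^ 2 - 1)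
        (sgn * X01 (x (σ τ) ^ 2 - 1) (y (σ τ) ^ 2 - 1) (z (σ τ) ^ 2 - 1)) τ ∧
      HasDerivAt (fun u => y (σ u) ^ 2 - 1)
        (sgn * X02 (x (σ τ) ^ 2 - 1) (y (σ τ) ^ 2 - 1) (z (σ τ) ^ 2 - 1)) τ ∧
      HasDerivAt (fun u => z (σ u) ^ 2 - 1)
        (sgn * X03 (x (σ τ) ^ 2 - 1) (y (σ τ) ^ 2 - 1) (z (σ τ) ^ 2 - 1)) τ := by
  intro τ
  have hP : x (σ τ) * y (σ τ) * z (σ τ) ≠ 0 := by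
    intro h
    have := hoct (σ τ)
    rw [h, mul_zero] at this
    exact lt_irrefl 0 this
  have hne : 2 * sgn * (x (σ τ) * y (σ τ) * z (σ τ)) ≠ 0 := by
    have hs : sgn ≠ 0 := by rcases hsgn with h | h <;> simp [h]
    positivity
  refine ⟨?_, ?_, ?_⟩
  · have h2 := (((hx (σ τ)).comp τ (hσ τ)).fun_pow 2).sub_const 1
    refine HasDerivAt.congr_deriv h2 ?_
    rcases hsgn with h | h <;> subst h <;> simp only [Function.comp_apply] <;> field_simp [left_ne_zero_of_mul (left_ne_zero_of_mul hP), right_ne_zero_of_mul (left_ne_zero_of_mul hP), right_ne_zero_of_mul hP] <;> ring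
  · have h2 := (((hy (σ τ)).comp τ (hσ τ)).fun_pow 2).sub_const 1
    refine HasDerivAt.congr_deriv h2 ?_
    rcases hsgn with h | h <;> subst h <;> simp only [Function.comp_apply] <;> field_simp [left_ne_zero_of_mul (left_ne_zero_of_mul hP), right_ne_zero_of_mul (left_ne_zero_of_mul hP), right_ne_zero_of_mul hP] <;> ring
  · have h2 := (((hz (σ τ)).comp τ (hσ τ)).fun_pow 2).sub_const 1
    refine HasDerivAt.congr_deriv h2 ?_
    rcases hsgn with h | h <;> subst h <;> simp only [Function.comp_apply] <;> field_simp [left_ne_zero_of_mul (left_ne_zero_of_mul hP), right_ne_zero_of_mul (left_ne_zero_of_mul hP), right_ne_zero_of_mul hP] <;> ring
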